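/- The operator Y produces a q-shift of the parameter b when acting on the Pastro polynomials: for every nonnegative integer n and all real x, (x - a^{-1}q) P_n(qx; a, b; q) + (a^{-1}q - b^{-1}x) P_n(x; a, b; q) = -b^{-1} (1 - b q^n) x P_n(x; a, bq; q). -/

import Mathlib

set_option maxHeartbeats 1000000


/-- The q-Pochhammer symbol `(z;q)_k = ∏_{j=0}^{k-1} (1 - z q^j)`. -/
noncomputable def qPoch (q z : ℝ) (k : ℕ) : ℝ :=
  ∏ j ∈ Finset.range k, (1 - z * q ^ j)

/-- Coefficient `c_{n,k}` of the monic Pastro polynomial. -/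
noncomputable def pastroCoeff (q a b : ℝ) (n k : ℕ) : ℝ :=
  (qPoch q (a⁻¹ * b * q ^ (1 - (n : ℤ))) n * qPoch q q n /
      (qPoch q (q ^ (-(n : ℤ))) n * qPoch q b n)) *
    (qPoch q (q ^ (-(n : ℤ))) k * qPoch q b k /
      (qPoch q (a⁻¹ * b * q ^ (1 - (n : ℤ))) k * qPoch q q k))

/-- The monic Pastro polynomial `P_n(x;a,b;q)`. -/
noncomputable def pastroP (q a b : ℝ) (n : ℕ) (x : ℝ) : ℝ :=
  ∑ k ∈ Finset.range (n + 1), pastroCoeff q a b n k * x ^ k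

lemma qPoch_succ (q z : ℝ) (k : ℕ) :
    qPoch q z (k + 1) = qPoch q z k * (1 - z * q ^ k) :=
  Finset.prod_range_succ _ _

lemma qPoch_shift (q z : ℝ) (k : ℕ) :
    (1 - z) * qPoch q (z * q) k = qPoch q z k * (1 - z * q ^ k) := by
  induction k with
  | zero => simp [qPoch]
  | succ k ih =>
    rw [qPoch_succ, qPoch_succ]
    linear_combination (1 - z * q * q ^ k) * ih

lemma qPoch_shift_div (q z : ℝ) (hz : (1 : ℝ) - z ≠ 0) (k : ℕ) :
    qPoch q (z * q) k = qPoch q z k * (1 - z * q ^ k) / (1 - z) := by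
  rw [eq_div_iff hz]
  linear_combination qPoch_shift q z k

lemma qPoch_ne_zero {q z : ℝ} {k : ℕ} (h : ∀ j, j < k → (1 : ℝ) - z * q ^ j ≠ 0) :
    qPoch q z k ≠ 0 :=
  Finset.prod_ne_zero_iff.mpr fun j hj => h j (Finset.mem_range.mp hj)

lemma zpow_helper (q : ℝ) (hq : q ≠ 0) (m : ℤ) (j : ℕ) :
    q ^ m * q ^ j = q ^ (m + (j : ℤ)) := by
  rw [← zpow_natCast q j, ← zpow_add₀ hq]

lemma one_sub_pow_ne (q : ℝ) (hq1 : ∀ k : ℤ, k ≠ 0 → q ^ k ≠ 1) {m : ℕ} (hm : m ≠ 0) :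
    (1 : ℝ) - q ^ m ≠ 0 := by
  have h := hq1 (m : ℤ) (by exact_mod_cast hm)
  rw [zpow_natCast] at h
  exact sub_ne_zero_of_ne (Ne.symm h)

lemma qPoch_q_ne_zero (q : ℝ) (hq1 : ∀ k : ℤ, k ≠ 0 → q ^ k ≠ 1) (m : ℕ) :
    qPoch q q m ≠ 0 := by
  refine qPoch_ne_zero fun j _ => ?_
  have e : q * q ^ j = q ^ (j + 1) := by ring
  rw [e]
  exact one_sub_pow_ne q hq1 (Nat.succ_ne_zero j)

lemma qPoch_b_ne_zero (q b : ℝ) (hbq : ∀ m : ℤ, b * q ^ m ≠ 1) (m : ℕ) :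
    qPoch q b m ≠ 0 := by
  refine qPoch_ne_zero fun j _ => ?_
  have h := hbq (j : ℤ)
  rw [zpow_natCast] at h
  exact sub_ne_zero_of_ne (Ne.symm h)

lemma one_sub_w_ne (q a b : ℝ) (hq : q ≠ 0) (habq : ∀ m : ℤ, a⁻¹ * b * q ^ m ≠ 1)
    (m : ℤ) (j : ℕ) : (1 : ℝ) - a⁻¹ * b * q ^ m * q ^ j ≠ 0 := by
  rw [mul_assoc, zpow_helper q hq]
  exact sub_ne_zero_of_ne (Ne.symm (habq (m + j)))

lemma qPoch_w_ne_zero (q a b : ℝ) (hq : q ≠ 0) (habq : ∀ m : ℤ, a⁻¹ * b * q ^ m ≠ 1)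
    (n m : ℕ) : qPoch q (a⁻¹ * b * q ^ (1 - (n : ℤ))) m ≠ 0 :=
  qPoch_ne_zero fun j _ => one_sub_w_ne q a b hq habq _ j

lemma qPoch_u_ne_zero (q : ℝ) (hq : q ≠ 0) (hq1 : ∀ k : ℤ, k ≠ 0 → q ^ k ≠ 1)
    (n m : ℕ) (hm : m ≤ n) : qPoch q (q ^ (-(n : ℤ))) m ≠ 0 := by
  refine qPoch_ne_zero fun j hj => ?_
  rw [zpow_helper q hq]
  exact sub_ne_zero_of_ne (Ne.symm (hq1 (-(n : ℤ) + j) (by omega)))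


private lemma ratioA_abstract (A P1 P2 P3 P4 u w bb qq : ℝ) (hP3 : P3 ≠ 0) (hP4 : P4 ≠ 0)
    (hw : (1 : ℝ) - w ≠ 0) (hg : (1 : ℝ) - qq ≠ 0) :
    A * (P1 * (1 - u) * (P2 * (1 - bb)) / (P3 * (1 - w) * (P4 * (1 - qq)))) *
      ((1 - w) * (1 - qq)) = A * (P1 * P2 / (P3 * P4)) * ((1 - u) * (1 - bb)) := by
  field_simp

private lemma ratioB_abstract (P1 P2 P3 P4 T1 T2 T3 T4 w b wn wk bn bk : ℝ)
    (hP3 : P3 ≠ 0) (hP4 : P4 ≠ 0) (hT3 : T3 ≠ 0) (hT4 : T4 ≠ 0)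
    (hw : (1 : ℝ) - w ≠ 0) (hb : (1 : ℝ) - b ≠ 0) (hbn : (1 : ℝ) - bn ≠ 0)
    (hwk : (1 : ℝ) - wk ≠ 0) :
    P1 * (1 - wn) / (1 - w) * P2 / (P3 * (P4 * (1 - bn) / (1 - b))) *
        (T1 * (T2 * (1 - bk) / (1 - b)) / (T3 * (1 - wk) / (1 - w) * T4)) *
      ((1 - bn) * (1 - wk)) =
    P1 * P2 / (P3 * P4) * (T1 * T2 / (T3 * T4)) * ((1 - wn) * (1 - bk)) := by
  field_simp

lemma pastro_ratioA (q a b : ℝ) (hq : q ≠ 0) (hq1 : ∀ k : ℤ, k ≠ 0 → q ^ k ≠ 1)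
    (hbq : ∀ m : ℤ, b * q ^ m ≠ 1) (habq : ∀ m : ℤ, a⁻¹ * b * q ^ m ≠ 1)
    (n k : ℕ) :
    pastroCoeff q a b n (k + 1) *
        ((1 - a⁻¹ * b * q ^ (1 - (n : ℤ)) * q ^ k) * (1 - q ^ (k + 1))) =
      pastroCoeff q a b n k * ((1 - q ^ (-(n : ℤ)) * q ^ k) * (1 - b * q ^ k)) := by
  unfold pastroCoeff
  rw [qPoch_succ, qPoch_succ, qPoch_succ, qPoch_succ,
    show (1 : ℝ) - q ^ (k + 1) = 1 - q * q ^ k by ring]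
  have hP3 := qPoch_w_ne_zero q a b hq habq n k
  have hP4 := qPoch_q_ne_zero q hq1 k
  have hDn1 := qPoch_u_ne_zero q hq hq1 n n le_rfl
  have hDn2 := qPoch_b_ne_zero q b hbq n
  have hF : (1 : ℝ) - a⁻¹ * b * q ^ (1 - (n : ℤ)) * q ^ k ≠ 0 :=
    one_sub_w_ne q a b hq habq _ k
  have hG : (1 : ℝ) - q * q ^ k ≠ 0 := by
    have e : q * q ^ k = q ^ (k + 1) := by ring
    rw [e]
    exact one_sub_pow_ne q hq1 (Nat.succ_ne_zero k)
  exact ratioA_abstract _ _ _ _ _ _ _ _ _ hP3 hP4 hF hG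

lemma pastro_ratioB (q a b : ℝ) (hq : q ≠ 0) (hq1 : ∀ k : ℤ, k ≠ 0 → q ^ k ≠ 1)
    (hbq : ∀ m : ℤ, b * q ^ m ≠ 1) (habq : ∀ m : ℤ, a⁻¹ * b * q ^ m ≠ 1)
    (n k : ℕ) :
    pastroCoeff q a (b * q) n k *
        ((1 - b * q ^ n) * (1 - a⁻¹ * b * q ^ (1 - (n : ℤ)) * q ^ k)) =
      pastroCoeff q a b n k *
        ((1 - a⁻¹ * b * q ^ (1 - (n : ℤ)) * q ^ n) * (1 - b * q ^ k)) := by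
  unfold pastroCoeff
  have e1 : a⁻¹ * (b * q) * q ^ (1 - (n : ℤ)) = (a⁻¹ * b * q ^ (1 - (n : ℤ))) * q := by
    ring
  rw [e1]
  have h1b : (1 : ℝ) - b ≠ 0 := by
    have h := hbq 0
    rw [zpow_zero, mul_one] at h
    exact sub_ne_zero_of_ne (Ne.symm h)
  have h1w : (1 : ℝ) - a⁻¹ * b * q ^ (1 - (n : ℤ)) ≠ 0 :=
    sub_ne_zero_of_ne (Ne.symm (habq _))
  rw [qPoch_shift_div q _ h1w n, qPoch_shift_div q _ h1w k,
    qPoch_shift_div q b h1b n, qPoch_shift_div q b h1b k]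
  have hP3 := qPoch_w_ne_zero q a b hq habq n k
  have hP4 := qPoch_q_ne_zero q hq1 k
  have hDn1 := qPoch_u_ne_zero q hq hq1 n n le_rfl
  have hDn2 := qPoch_b_ne_zero q b hbq n
  have hbn : (1 : ℝ) - b * q ^ n ≠ 0 := by
    have h := hbq (n : ℤ)
    rw [zpow_natCast] at h
    exact sub_ne_zero_of_ne (Ne.symm h)
  have hFk : (1 : ℝ) - a⁻¹ * b * q ^ (1 - (n : ℤ)) * q ^ k ≠ 0 :=
    one_sub_w_ne q a b hq habq _ k
  exact ratioB_abstract _ _ _ _ _ _ _ _ _ _ _ _ _ _ hDn1 hDn2 hP3 hP4 h1w h1b hbn hFk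

/-- The operator `Y` produces a q-shift of the parameter `b` on the Pastro
polynomials: `Y P_n(x;a,b;q) = -b⁻¹(1 - b q^n) x P_n(x;a,bq;q)`. -/
theorem pastro_Y_contiguity (q a b : ℝ) (hq : q ≠ 0) (hq1 : ∀ k : ℤ, k ≠ 0 → q ^ k ≠ 1)
    (ha : a ≠ 0) (hb : b ≠ 0)
    (hbq : ∀ m : ℤ, b * q ^ m ≠ 1) (habq : ∀ m : ℤ, a⁻¹ * b * q ^ m ≠ 1)
    (n : ℕ) (x : ℝ) :
    (x - a⁻¹ * q) * pastroP q a b n (q * x) + (a⁻¹ * q - b⁻¹ * x) * pastroP q a b n x =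
      -b⁻¹ * (1 - b * q ^ n) * x * pastroP q a (b * q) n x := by
  set c : ℕ → ℝ := fun k => pastroCoeff q a b n k with hc
  set d : ℕ → ℝ := fun k => pastroCoeff q a (b * q) n k with hd
  have hsplit : (q : ℝ) ^ (1 - (n : ℤ)) = q * q ^ (-(n : ℤ)) := by
    rw [show (1 - (n : ℤ)) = 1 + -(n : ℤ) by ring, zpow_add₀ hq, zpow_one]
  have hWn : a⁻¹ * b * q ^ (1 - (n : ℤ)) * q ^ n = a⁻¹ * b * q := by
    rw [mul_assoc, zpow_helper q hq, show (1 - (n : ℤ) + (n : ℤ)) = 1 by ring, zpow_one]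
  have hbn : (1 : ℝ) - b * q ^ n ≠ 0 := by
    have h := hbq (n : ℤ)
    rw [zpow_natCast] at h
    exact sub_ne_zero_of_ne (Ne.symm h)
  have habq1 : (1 : ℝ) - a⁻¹ * b * q ≠ 0 := by
    have h := habq 1
    rw [zpow_one] at h
    exact sub_ne_zero_of_ne (Ne.symm h)
  -- termwise identities
  have key1 : ∀ k : ℕ, (q ^ k - b⁻¹) * c k + a⁻¹ * q * (1 - q ^ (k + 1)) * c (k + 1) =
      -b⁻¹ * (1 - b * q ^ n) * d k := by
    intro k
    have hA := pastro_ratioA q a b hq hq1 hbq habq n k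
    have hB := pastro_ratioB q a b hq hq1 hbq habq n k
    rw [hWn] at hB
    have hF : (1 : ℝ) - a⁻¹ * b * q ^ (1 - (n : ℤ)) * q ^ k ≠ 0 :=
      one_sub_w_ne q a b hq habq _ k
    have hG : (1 : ℝ) - q ^ (k + 1) ≠ 0 := one_sub_pow_ne q hq1 (Nat.succ_ne_zero k)
    rw [hsplit] at hA hB hF
    set u := (q : ℝ) ^ (-(n : ℤ)) with hu
    have hbb : b * b⁻¹ = 1 := mul_inv_cancel₀ hb
    refine mul_left_cancel₀
      (mul_ne_zero hb (mul_ne_zero hbn hF)) ?_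
    linear_combination (a⁻¹ * q * b * (1 - b * q ^ n)) * hA +
      (b⁻¹ * b * (1 - b * q ^ n)) * hB +
      ((1 - b * q ^ n) * c k *
        (-(1 - a⁻¹ * b * (q * u) * q ^ k) + (1 - a⁻¹ * b * q) * (1 - b * q ^ k))) * hbb
  have key2 : (q ^ n - b⁻¹) * c n = -b⁻¹ * (1 - b * q ^ n) * d n := by
    have hB := pastro_ratioB q a b hq hq1 hbq habq n n
    rw [hWn] at hB
    have hdn : d n = c n :=
      mul_right_cancel₀ (mul_ne_zero hbn habq1) (by linear_combination hB)
    rw [hdn]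
    linear_combination (-(q ^ n * c n)) * mul_inv_cancel₀ hb
  -- expand the sums
  have lhs_eq : (x - a⁻¹ * q) * pastroP q a b n (q * x) +
      (a⁻¹ * q - b⁻¹ * x) * pastroP q a b n x =
      (∑ k ∈ Finset.range (n + 1), (q ^ k - b⁻¹) * c k * x ^ (k + 1)) +
        ∑ k ∈ Finset.range (n + 1), a⁻¹ * q * (1 - q ^ k) * c k * x ^ k := by
    unfold pastroP
    rw [Finset.mul_sum, Finset.mul_sum, ← Finset.sum_add_distrib,
      ← Finset.sum_add_distrib]
    refine Finset.sum_congr rfl fun k _ => ?_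
    rw [mul_pow]
    ring
  have rhs_eq : -b⁻¹ * (1 - b * q ^ n) * x * pastroP q a (b * q) n x =
      ∑ k ∈ Finset.range (n + 1), -b⁻¹ * (1 - b * q ^ n) * d k * x ^ (k + 1) := by
    unfold pastroP
    rw [Finset.mul_sum]
    refine Finset.sum_congr rfl fun k _ => ?_
    ring
  rw [lhs_eq, rhs_eq]
  have hS2 : (∑ k ∈ Finset.range (n + 1), a⁻¹ * q * (1 - q ^ k) * c k * x ^ k) =
      ∑ k ∈ Finset.range n, a⁻¹ * q * (1 - q ^ (k + 1)) * c (k + 1) * x ^ (k + 1) := by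
    rw [Finset.sum_range_succ']
    simp
  rw [hS2, Finset.sum_range_succ, Finset.sum_range_succ
    (fun k => -b⁻¹ * (1 - b * q ^ n) * d k * x ^ (k + 1))]
  have hmain : (∑ k ∈ Finset.range n, (q ^ k - b⁻¹) * c k * x ^ (k + 1)) +
      (∑ k ∈ Finset.range n, a⁻¹ * q * (1 - q ^ (k + 1)) * c (k + 1) * x ^ (k + 1)) =
      ∑ k ∈ Finset.range n, -b⁻¹ * (1 - b * q ^ n) * d k * x ^ (k + 1) := by
    rw [← Finset.sum_add_distrib]
    refine Finset.sum_congr rfl fun k _ => ?_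
    linear_combination x ^ (k + 1) * key1 k
  have hlast : (q ^ n - b⁻¹) * c n * x ^ (n + 1) =
      -b⁻¹ * (1 - b * q ^ n) * d n * x ^ (n + 1) := by
    linear_combination x ^ (n + 1) * key2
  linear_combination hmain + hlast
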